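/- arXiv:2501.07756 — 5 statements merged into one kernel-verified Lean document; each statement's English description precedes it below -/
import Mathlib

section
/- For every θ ∈ ℝ, the operator 𝒰_θ is unitary, commutes with M_g for every bounded g : ℕ → ℂ, and satisfies 𝒰_θ U 𝒰_θ* = e^{2πiθ}·U, 𝒰_θ V 𝒰_θ* = e^{2πiθ}·V, 𝒰_θ S 𝒰_θ* = e^{2πiθ}·S, and 𝒰_θ W 𝒰_θ* = e^{2πiθ}·W. (Thus conjugation by 𝒰_θ implements a gauge action on each shift algebra.) -/
/- Fix an integer `s ≥ 2`.  `Vtx s = Σ n, Fin (s^n)`, `Hsp s = ℓ²(Vtx s, ℂ)` with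
canonical orthonormal basis `Evec s v = lp.single 2 v 1`.  The four shifts
(Bunce–Deddens `U`, Hensel `V`, Bernoulli `S`, Serre `W`) and the gauge unitary
`𝒰_θ E_{(n,x)} = e^{2πinθ} E_{(n,x)}` are encoded by their action on the basis. -/

noncomputable section

abbrev Vtx (s : ℕ) := Σ n : ℕ, Fin (s ^ n)

abbrev Hsp (s : ℕ) := lp (fun _ : Vtx s => ℂ) 2

def Evec (s : ℕ) (v : Vtx s) : Hsp s := lp.single 2 v 1

def idxU (s n : ℕ) (hs : 2 ≤ s) (x : Fin (s ^ n)) : Fin (s ^ (n + 1)) :=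
  ⟨(x : ℕ) + 1, by
    have hx := x.2
    have h : s ^ n < s ^ (n + 1) := Nat.pow_lt_pow_succ (by omega)
    omega⟩

def idxV (s n : ℕ) (hs : 2 ≤ s) (x : Fin (s ^ n)) : Fin (s ^ (n + 1)) :=
  ⟨s * (x : ℕ), by
    have hx := x.2
    have h1 : s * (x : ℕ) < s * s ^ n := mul_lt_mul_of_pos_left hx (by omega)
    have h2 : s ^ (n + 1) = s * s ^ n := by rw [pow_succ]; ring
    omega⟩

def idxS (s n : ℕ) (x : Fin (s ^ n)) (j : Fin s) : Fin (s ^ (n + 1)) :=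
  ⟨s * (x : ℕ) + (j : ℕ), by
    have hx := x.2
    have hj := j.2
    have h1 : s * ((x : ℕ) + 1) ≤ s * s ^ n := Nat.mul_le_mul (le_refl s) (by omega)
    have h2 : s * ((x : ℕ) + 1) = s * (x : ℕ) + s := by ring
    have h3 : s ^ (n + 1) = s * s ^ n := by rw [pow_succ]; ring
    omega⟩

def idxW (s n : ℕ) (x : Fin (s ^ n)) (j : Fin s) : Fin (s ^ (n + 1)) :=
  ⟨(x : ℕ) + (j : ℕ) * s ^ n, by
    have hx := x.2
    have hj := j.2
    have h1 : (j : ℕ) * s ^ n ≤ (s - 1) * s ^ n :=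
      Nat.mul_le_mul (by omega) (le_refl (s ^ n))
    have h2 : (s - 1) * s ^ n = s * s ^ n - s ^ n := by rw [Nat.sub_one_mul]
    have h3 : s ^ n ≤ s * s ^ n := Nat.le_mul_of_pos_left _ (by omega)
    have h4 : s ^ (n + 1) = s * s ^ n := by rw [pow_succ]; ring
    omega⟩

section Aux

variable {s : ℕ}

/-- Two continuous linear maps agreeing on the canonical basis are equal. -/
lemma clm_ext_evec (T T' : Hsp s →L[ℂ] Hsp s)
    (h : ∀ v : Vtx s, T (Evec s v) = T' (Evec s v)) : T = T' := by
  refine ContinuousLinearMap.ext fun f => ?_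
  have hf : HasSum (fun v : Vtx s => lp.single 2 v (f v)) f :=
    lp.hasSum_single ENNReal.ofNat_ne_top f
  have key : ∀ v : Vtx s,
      lp.single (E := fun _ : Vtx s => ℂ) 2 v (f v) = f v • Evec s v := by
    intro v
    rw [Evec, ← lp.single_smul, smul_eq_mul, mul_one]
  have h1 := hf.mapL T
  have h2 := hf.mapL T'
  have heq : (fun v : Vtx s => T (lp.single 2 v (f v)))
      = fun v : Vtx s => T' (lp.single 2 v (f v)) := by
    funext v
    rw [key v, map_smul, map_smul, h v]
  exact h1.unique (heq ▸ h2)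

/-- Coordinates of a vector via inner products with the basis. -/
lemma coord_eq_inner (y : Hsp s) (w : Vtx s) :
    y w = inner (𝕜 := ℂ) (Evec s w) y := by
  rw [Evec, lp.inner_single_left]
  simp [RCLike.inner_apply]

/-- The adjoint of a diagonal operator on the basis. -/
lemma adjoint_evec (A : Hsp s →L[ℂ] Hsp s) (c : ℕ → ℂ)
    (hA : ∀ (n : ℕ) (x : Fin (s ^ n)), A (Evec s ⟨n, x⟩) = c n • Evec s ⟨n, x⟩)
    (n : ℕ) (x : Fin (s ^ n)) :
    ContinuousLinearMap.adjoint A (Evec s ⟨n, x⟩)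
      = (starRingEnd ℂ) (c n) • Evec s ⟨n, x⟩ := by
  apply lp.ext
  funext w
  obtain ⟨m, z⟩ := w
  have lhs : (ContinuousLinearMap.adjoint A (Evec s ⟨n, x⟩)) ⟨m, z⟩
      = (starRingEnd ℂ) (c m) * (Evec s ⟨n, x⟩) ⟨m, z⟩ := by
    rw [coord_eq_inner, ContinuousLinearMap.adjoint_inner_right, hA m z,
      inner_smul_left, ← coord_eq_inner]
  have rhs : (((starRingEnd ℂ) (c n) • Evec s ⟨n, x⟩ : Hsp s)) ⟨m, z⟩
      = (starRingEnd ℂ) (c n) * (Evec s ⟨n, x⟩) ⟨m, z⟩ := rfl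
  rw [lhs, rhs]
  rcases eq_or_ne (⟨m, z⟩ : Vtx s) ⟨n, x⟩ with h | h
  · obtain ⟨rfl, -⟩ : m = n ∧ HEq z x := by
      simpa [Sigma.mk.inj_iff] using h
    rfl
  · rw [Evec, lp.single_apply_ne _ _ _ h, mul_zero, mul_zero]

end Aux

set_option maxHeartbeats 1000000 in
/-- For every `θ ∈ ℝ`, the gauge operator `𝒰_θ` is unitary, commutes with every
diagonal operator `M_g` (for bounded `g : ℕ → ℂ`), and conjugation by `𝒰_θ`
multiplies each of the four shifts `U`, `V`, `S`, `W` by `e^{2πiθ}`. -/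
theorem statement5 (s : ℕ) (hs : 2 ≤ s) (θ : ℝ)
    (U V S W 𝒰 : Hsp s →L[ℂ] Hsp s)
    (hU : ∀ (n : ℕ) (x : Fin (s ^ n)), U (Evec s ⟨n, x⟩) = Evec s ⟨n + 1, idxU s n hs x⟩)
    (hV : ∀ (n : ℕ) (x : Fin (s ^ n)), V (Evec s ⟨n, x⟩) = Evec s ⟨n + 1, idxV s n hs x⟩)
    (hS : ∀ (n : ℕ) (x : Fin (s ^ n)),
      S (Evec s ⟨n, x⟩) = (1 / (s : ℂ)) • ∑ j : Fin s, Evec s ⟨n + 1, idxS s n x j⟩)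
    (hW : ∀ (n : ℕ) (x : Fin (s ^ n)),
      W (Evec s ⟨n, x⟩) = (1 / (Real.sqrt s : ℂ)) • ∑ j : Fin s, Evec s ⟨n + 1, idxW s n x j⟩)
    (h𝒰 : ∀ (n : ℕ) (x : Fin (s ^ n)),
      𝒰 (Evec s ⟨n, x⟩)
        = Complex.exp (2 * Real.pi * Complex.I * (n : ℂ) * (θ : ℂ)) • Evec s ⟨n, x⟩) :
    (ContinuousLinearMap.adjoint 𝒰 * 𝒰 = 1 ∧ 𝒰 * ContinuousLinearMap.adjoint 𝒰 = 1) ∧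
    (∀ (g : ℕ → ℂ) (M : Hsp s →L[ℂ] Hsp s), (∃ C : ℝ, ∀ x : ℕ, ‖g x‖ ≤ C) →
      (∀ (n : ℕ) (x : Fin (s ^ n)), M (Evec s ⟨n, x⟩) = g (x : ℕ) • Evec s ⟨n, x⟩) →
      𝒰 * M = M * 𝒰) ∧
    𝒰 * U * ContinuousLinearMap.adjoint 𝒰
      = Complex.exp (2 * Real.pi * Complex.I * (θ : ℂ)) • U ∧
    𝒰 * V * ContinuousLinearMap.adjoint 𝒰
      = Complex.exp (2 * Real.pi * Complex.I * (θ : ℂ)) • V ∧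
    𝒰 * S * ContinuousLinearMap.adjoint 𝒰
      = Complex.exp (2 * Real.pi * Complex.I * (θ : ℂ)) • S ∧
    𝒰 * W * ContinuousLinearMap.adjoint 𝒰
      = Complex.exp (2 * Real.pi * Complex.I * (θ : ℂ)) • W := by
  set ε : ℕ → ℂ := fun n => Complex.exp (2 * Real.pi * Complex.I * (n : ℂ) * (θ : ℂ)) with hε
  have hadj : ∀ (n : ℕ) (x : Fin (s ^ n)),
      ContinuousLinearMap.adjoint 𝒰 (Evec s ⟨n, x⟩)
        = (starRingEnd ℂ) (ε n) • Evec s ⟨n, x⟩ := adjoint_evec 𝒰 ε h𝒰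
  have hconj : ∀ n : ℕ,
      (starRingEnd ℂ) (2 * (Real.pi : ℂ) * Complex.I * (n : ℂ) * (θ : ℂ))
        = -(2 * (Real.pi : ℂ) * Complex.I * (n : ℂ) * (θ : ℂ)) := by
    intro n
    simp only [map_mul, Complex.conj_I, Complex.conj_ofReal, map_ofNat, map_natCast]
    ring
  have hunit : ∀ n : ℕ, (starRingEnd ℂ) (ε n) * ε n = 1 := by
    intro n
    rw [hε]
    simp only
    rw [← Complex.exp_conj, hconj, ← Complex.exp_add, neg_add_cancel, Complex.exp_zero]
  have hshift : ∀ n : ℕ,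
      ε (n + 1) * (starRingEnd ℂ) (ε n)
        = Complex.exp (2 * Real.pi * Complex.I * (θ : ℂ)) := by
    intro n
    rw [hε]
    simp only
    rw [← Complex.exp_conj, hconj, ← Complex.exp_add]
    congr 1
    push_cast
    ring
  refine ⟨⟨?_, ?_⟩, ?_, ?_, ?_, ?_, ?_⟩
  · -- 𝒰* 𝒰 = 1
    apply clm_ext_evec
    rintro ⟨n, x⟩
    rw [ContinuousLinearMap.mul_apply, h𝒰, map_smul, hadj, smul_smul,
      ContinuousLinearMap.one_apply]
    rw [mul_comm, hunit, one_smul]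
  · -- 𝒰 𝒰* = 1
    apply clm_ext_evec
    rintro ⟨n, x⟩
    rw [ContinuousLinearMap.mul_apply, hadj, map_smul, h𝒰, smul_smul,
      ContinuousLinearMap.one_apply, hunit, one_smul]
  · -- commutes with diagonal operators
    intro g M _ hM
    apply clm_ext_evec
    rintro ⟨n, x⟩
    rw [ContinuousLinearMap.mul_apply, ContinuousLinearMap.mul_apply, hM, map_smul, h𝒰,
      map_smul, hM, smul_smul, smul_smul, mul_comm]
  · -- gauge action on U
    apply clm_ext_evec
    rintro ⟨n, x⟩
    rw [ContinuousLinearMap.mul_apply, hadj, map_smul, ContinuousLinearMap.mul_apply, hU,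
      h𝒰, ContinuousLinearMap.smul_apply, hU, smul_smul]
    congr 1
    linear_combination hshift n
  · -- gauge action on V
    apply clm_ext_evec
    rintro ⟨n, x⟩
    rw [ContinuousLinearMap.mul_apply, hadj, map_smul, ContinuousLinearMap.mul_apply, hV,
      h𝒰, ContinuousLinearMap.smul_apply, hV, smul_smul]
    congr 1
    linear_combination hshift n
  · -- gauge action on S
    apply clm_ext_evec
    rintro ⟨n, x⟩
    rw [ContinuousLinearMap.mul_apply, hadj, map_smul, ContinuousLinearMap.mul_apply, hS,
      map_smul, map_sum]
    simp only [h𝒰]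
    rw [← Finset.smul_sum, ContinuousLinearMap.smul_apply, hS, smul_smul, smul_smul,
      smul_smul]
    congr 1
    linear_combination (1 / (s : ℂ)) * hshift n
  · -- gauge action on W
    apply clm_ext_evec
    rintro ⟨n, x⟩
    rw [ContinuousLinearMap.mul_apply, hadj, map_smul, ContinuousLinearMap.mul_apply, hW,
      map_smul, map_sum]
    simp only [h𝒰]
    rw [← Finset.smul_sum, ContinuousLinearMap.smul_apply, hW, smul_smul, smul_smul,
      smul_smul]
    congr 1
    linear_combination (1 / (Real.sqrt s : ℂ)) * hshift n
end
end

section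
/- Let A be a unital C*-algebra, J ∈ A with J*J = 1, and B a unital C*-subalgebra of A such that J b J* ∈ B and J* b J ∈ B for all b ∈ B (a coefficient algebra for J). Then α(1) = JJ* is a projection in B and the range of α(a) = J a J* on B satisfies {J a J* : a ∈ B} = {JJ*·b·JJ* : b ∈ B}; in particular the range of α restricted to B is the hereditary corner α(1)·B·α(1). -/
/-- Let `A` be a unital C*-algebra, `J ∈ A` an isometry (`J*J = 1`), and `B` a
closed unital *-subalgebra of `A` which is a coefficient algebra for `J`
(`J b J* ∈ B` and `J* b J ∈ B` for all `b ∈ B`).  Then `α(1) = JJ*` is a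
projection in `B`, and the range of `α(a) = J a J*` on `B` is the hereditary
corner `α(1)·B·α(1)`. -/
theorem statement9 (A : Type*) [NormedRing A] [StarRing A] [CStarRing A]
    [NormedAlgebra ℂ A] [CompleteSpace A] [StarModule ℂ A]
    (J : A) (hJ : star J * J = 1)
    (B : StarSubalgebra ℂ A) (hBclosed : IsClosed (B : Set A))
    (hα : ∀ b ∈ B, J * b * star J ∈ B)
    (hβ : ∀ b ∈ B, star J * b * J ∈ B) :
    J * star J ∈ B ∧
    IsSelfAdjoint (J * star J) ∧
    (J * star J) * (J * star J) = J * star J ∧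
    (fun b => J * b * star J) '' (B : Set A)
      = (fun b => (J * star J) * b * (J * star J)) '' (B : Set A) := by
  have hp : J * star J ∈ B := by simpa using hα 1 B.one_mem
  refine ⟨hp, ?_, ?_, ?_⟩
  · simp [IsSelfAdjoint, star_mul]
  · calc (J * star J) * (J * star J) = J * (star J * J) * star J := by noncomm_ring
    _ = J * star J := by rw [hJ]; noncomm_ring
  · ext x
    constructor
    · rintro ⟨b, hb, rfl⟩
      refine ⟨J * b * star J, hα b hb, ?_⟩
      show (J * star J) * (J * b * star J) * (J * star J) = J * b * star J
      calc (J * star J) * (J * b * star J) * (J * star J)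
          = J * ((star J * J) * b * (star J * J)) * star J := by noncomm_ring
        _ = J * b * star J := by rw [hJ]; noncomm_ring
    · rintro ⟨b, hb, rfl⟩
      refine ⟨star J * b * J, hβ b hb, ?_⟩
      show J * (star J * b * J) * star J = (J * star J) * b * (J * star J)
      noncomm_ring
end

section
/- Let A be a unital C*-algebra, J ∈ A with J*J = 1, and B a unital C*-subalgebra of A with J b J* ∈ B and J* b J ∈ B for all b ∈ B. Let I ⊆ B be a closed two-sided ideal of B with J a J* ∈ I and J* a J ∈ I for all a ∈ I. Let A_J be the smallest closed *-subalgebra of A containing B and J, and let 𝓘_J be the smallest closed *-subalgebra of A containing {a·J^n : a ∈ I, n ∈ ℕ}. Then 𝓘_J is a two-sided ideal in A_J: for all x ∈ A_J and y ∈ 𝓘_J, both x·y ∈ 𝓘_J and y·x ∈ 𝓘_J. -/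
open scoped ContinuousMapZero

set_option maxHeartbeats 1000000
set_option synthInstance.maxHeartbeats 400000

/-- Let `A` be a unital C*-algebra, `J ∈ A` an isometry (`J*J = 1`), and `B` a closed
unital *-subalgebra of `A` which is a coefficient algebra for `J`.  Let `I ⊆ B` be a
closed two-sided ideal of `B` which is invariant (`J a J* ∈ I` and `J* a J ∈ I` for
`a ∈ I`).  Let `A_J` be the smallest closed *-subalgebra of `A` containing `B` and `J`,
and `𝓘_J` the smallest closed *-subalgebra of `A` containing `{a·J^n : a ∈ I, n ∈ ℕ}`.
Then `𝓘_J` is a two-sided ideal in `A_J`. -/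
theorem statement10 (A : Type*) [NormedRing A] [StarRing A] [CStarRing A]
    [NormedAlgebra ℂ A] [CompleteSpace A] [StarModule ℂ A]
    (J : A) (hJ : star J * J = 1)
    (B : StarSubalgebra ℂ A) (hBclosed : IsClosed (B : Set A))
    (hBα : ∀ b ∈ B, J * b * star J ∈ B)
    (hBβ : ∀ b ∈ B, star J * b * J ∈ B)
    (I : Set A) (hIB : I ⊆ (B : Set A)) (hIclosed : IsClosed I)
    (hI0 : (0 : A) ∈ I)
    (hIadd : ∀ a ∈ I, ∀ b ∈ I, a + b ∈ I)
    (hIneg : ∀ a ∈ I, -a ∈ I)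
    (hImull : ∀ b ∈ B, ∀ a ∈ I, b * a ∈ I)
    (hImulr : ∀ a ∈ I, ∀ b ∈ B, a * b ∈ I)
    (hIα : ∀ a ∈ I, J * a * star J ∈ I)
    (hIβ : ∀ a ∈ I, star J * a * J ∈ I) :
    ∀ x ∈ (StarAlgebra.adjoin ℂ ((B : Set A) ∪ {J})).topologicalClosure,
      ∀ y ∈ (NonUnitalStarAlgebra.adjoin ℂ
          {z : A | ∃ a ∈ I, ∃ n : ℕ, z = a * J ^ n}).topologicalClosure,
        x * y ∈ (NonUnitalStarAlgebra.adjoin ℂ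
            {z : A | ∃ a ∈ I, ∃ n : ℕ, z = a * J ^ n}).topologicalClosure ∧
        y * x ∈ (NonUnitalStarAlgebra.adjoin ℂ
            {z : A | ∃ a ∈ I, ∃ n : ℕ, z = a * J ^ n}).topologicalClosure := by
  classical
  set S : Set A := {z : A | ∃ a ∈ I, ∃ n : ℕ, z = a * J ^ n} with hS
  set K : NonUnitalStarSubalgebra ℂ A :=
    (NonUnitalStarAlgebra.adjoin ℂ S).topologicalClosure with hK
  letI : CStarAlgebra A :=
    { ‹NormedRing A›, ‹StarRing A›, ‹CStarRing A›, ‹NormedAlgebra ℂ A›,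
      ‹CompleteSpace A›, ‹StarModule ℂ A› with }
  letI : PartialOrder A := CStarAlgebra.spectralOrder A
  letI : StarOrderedRing A := CStarAlgebra.spectralOrderedRing A
  -- ### Step 1 : `I` is closed under `star`.
  have hIstar : ∀ a ∈ I, star a ∈ I := by
    intro a ha
    set x : A := star a * a with hxdef
    have hxI : x ∈ I := hImull (star a) (star_mem (hIB ha)) a ha
    have hxsa : IsSelfAdjoint x := IsSelfAdjoint.star_mul_self a
    have hx0 : (0 : A) ≤ x := star_mul_self_nonneg a
    have hσ : ∀ t ∈ quasispectrum ℝ x, 0 ≤ t := quasispectrum_nonneg_of_nonneg x hx0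
    -- the closure of the (non-unital) algebra generated by `x` sits inside `I`
    have hclosure_sub : closure (↑(NonUnitalStarAlgebra.adjoin ℝ {x}) : Set A) ⊆ I := by
      apply closure_minimal ?_ hIclosed
      intro y hy
      have hy' : y ∈ NonUnitalAlgebra.adjoin ℝ ({x} ∪ star {x}) := hy
      refine NonUnitalAlgebra.adjoin_induction (p := fun y _ => y ∈ I)
        ?_ ?_ ?_ ?_ ?_ hy'
      · intro z hz
        have hz' : z = x := by
          rcases hz with h | h
          · simpa using h
          · simpa [Set.star_singleton, hxsa.star_eq] using h
        exact hz' ▸ hxI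
      · exact fun u v _ _ hu hv => hIadd u hu v hv
      · exact hI0
      · exact fun u v _ _ hu hv => hImull u (hIB hu) v hv
      · intro r z _ hz
        rw [Algebra.smul_def]
        refine hImull _ ?_ z hz
        rw [IsScalarTower.algebraMap_apply ℝ ℂ A r]
        exact B.algebraMap_mem _
    -- every continuous function (vanishing at `0`) of `x` lies in `I`
    have hmemI : ∀ F : C(quasispectrum ℝ x, ℝ)₀, cfcₙHom hxsa F ∈ I := by
      intro F
      have h₁ := (cfcₙHom_isClosedEmbedding hxsa).continuous.range_subset_closure_image_dense
        (ContinuousMapZero.adjoin_id_dense (s := quasispectrum ℝ x)) ⟨F, rfl⟩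
      apply hclosure_sub
      refine closure_mono ?_ h₁
      have himg : (cfcₙHom hxsa) ''
          (NonUnitalStarAlgebra.adjoin ℝ
            {(ContinuousMapZero.id (quasispectrum ℝ x) : C(quasispectrum ℝ x, ℝ)₀)} :
              Set C(quasispectrum ℝ x, ℝ)₀)
          ⊆ (NonUnitalStarAlgebra.adjoin ℝ {x} : Set A) := by
        rw [← NonUnitalStarSubalgebra.coe_map,
          NonUnitalStarAlgHom.map_adjoin_singleton]
        have : cfcₙHom (R := ℝ) hxsa (ContinuousMapZero.id (quasispectrum ℝ x)) = x := cfcₙHom_id hxsa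
        rw [this]
      exact himg
    -- now approximate `star a`
    have key : ∀ ε : ℝ, 0 < ε → ∃ u ∈ I, ‖star a - u * star a‖ ≤ Real.sqrt ε := by
      intro ε hε
      set f : ℝ → ℝ := fun t => t * (ε + t)⁻¹ with hfdef
      have hεt : ∀ t ∈ quasispectrum ℝ x, ε + t ≠ 0 := fun t ht => by
        have := hσ t ht; positivity
      have hfc : ContinuousOn f (quasispectrum ℝ x) := by
        apply continuousOn_id.mul
        exact ((continuous_const.add continuous_id).continuousOn).inv₀ hεt
      have hf0 : f 0 = 0 := by simp [hfdef]
      set u : A := cfcₙ f x with hudef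
      have huI : u ∈ I := by
        rw [hudef, cfcₙ_apply f x hfc hf0 hxsa]
        exact hmemI _
      have husa : IsSelfAdjoint u := cfcₙ_predicate f x
      -- continuity facts
      have hidc : ContinuousOn (fun t : ℝ => t) (quasispectrum ℝ x) := continuousOn_id
      have hftc : ContinuousOn (fun t : ℝ => f t * t) (quasispectrum ℝ x) := hfc.mul hidc
      have htfc : ContinuousOn (fun t : ℝ => t * f t) (quasispectrum ℝ x) := hidc.mul hfc
      have hf3c : ContinuousOn (fun t : ℝ => f t * (t * f t)) (quasispectrum ℝ x) :=
        hfc.mul htfc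
      -- identities
      have e1 : cfcₙ (fun t : ℝ => f t * t) x = u * x := by
        rw [cfcₙ_mul f (fun t => t) x hfc hf0 hidc rfl, cfcₙ_id' ℝ x]
      have e2 : cfcₙ (fun t : ℝ => t * f t) x = x * u := by
        rw [cfcₙ_mul (fun t => t) f x hidc rfl hfc hf0, cfcₙ_id' ℝ x]
      have e3 : cfcₙ (fun t : ℝ => f t * (t * f t)) x = u * (x * u) := by
        rw [cfcₙ_mul f (fun t => t * f t) x hfc hf0 htfc (by simp [hf0]), e2]
      set hfun : ℝ → ℝ := fun t => t - f t * t - t * f t + f t * (t * f t) with hfun_def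
      have e4 : cfcₙ hfun x = x - u * x - x * u + u * (x * u) := by
        rw [hfun_def]
        rw [cfcₙ_add (fun t => t - f t * t - t * f t) (fun t => f t * (t * f t)) x
          ((hidc.sub hftc).sub htfc) (by simp [hf0]) hf3c (by simp [hf0])]
        rw [cfcₙ_sub (fun t => t - f t * t) (fun t => t * f t) x
          (hidc.sub hftc) (by simp [hf0]) htfc (by simp [hf0])]
        rw [cfcₙ_sub (fun t => t) (fun t => f t * t) x hidc rfl hftc (by simp [hf0])]
        rw [cfcₙ_id' ℝ x, e1, e2, e3]
      have e5 : (1 - u) * x * (1 - u) = cfcₙ hfun x := by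
        rw [e4]; noncomm_ring
      -- norm bound
      have hbound : ‖cfcₙ hfun x‖ ≤ ε := by
        apply norm_cfcₙ_le
        intro t ht
        have ht0 : 0 ≤ t := hσ t ht
        have hεt' : 0 < ε + t := by linarith
        have hval : hfun t = t * (ε / (ε + t)) ^ 2 := by
          have h1f : 1 - f t = ε / (ε + t) := by
            rw [hfdef]
            field_simp
            ring
          have : hfun t = t * (1 - f t) ^ 2 := by rw [hfun_def]; ring
          rw [this, h1f]
        have h2 : t * (ε / (ε + t)) ^ 2 = t * ε ^ 2 / (ε + t) ^ 2 := by
          field_simp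
        rw [Real.norm_eq_abs, hval, abs_of_nonneg (by positivity), h2,
          div_le_iff₀ (by positivity)]
        nlinarith [sq_nonneg t, sq_nonneg ε, mul_nonneg ht0 (sq_nonneg ε)]
      -- conclude
      refine ⟨u, huI, ?_⟩
      have hz : star a - u * star a = (1 - u) * star a := by noncomm_ring
      have hzn : ‖star a - u * star a‖ * ‖star a - u * star a‖ ≤ ε := by
        rw [hz, ← CStarRing.norm_self_mul_star]
        have hstar : star ((1 - u) * star a) = a * (1 - u) := by
          rw [star_mul, star_star, star_sub, star_one, husa.star_eq]
        rw [hstar]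
        have : (1 - u) * star a * (a * (1 - u)) = (1 - u) * x * (1 - u) := by
          rw [hxdef]; noncomm_ring
        rw [this, e5]
        exact hbound
      have : ‖star a - u * star a‖ ≤ Real.sqrt ε := by
        rw [← Real.sqrt_mul_self (norm_nonneg (star a - u * star a))]
        exact Real.sqrt_le_sqrt hzn
      exact this
    -- `star a` is in the closure of `I`
    have : star a ∈ closure I := by
      rw [Metric.mem_closure_iff]
      intro δ hδ
      obtain ⟨u, huI, hu⟩ := key ((δ / 2) ^ 2) (by positivity)
      refine ⟨u * star a, hImulr u huI (star a) (star_mem (hIB ha)), ?_⟩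
      rw [dist_eq_norm]
      calc ‖star a - u * star a‖ ≤ Real.sqrt ((δ / 2) ^ 2) := hu
        _ = δ / 2 := Real.sqrt_sq (by positivity)
        _ < δ := by linarith
    rwa [hIclosed.closure_eq] at this
  -- ### Step 2 : generators of `K` and basic facts
  have memK : ∀ a ∈ I, ∀ n : ℕ, a * J ^ n ∈ K := fun a ha n =>
    (NonUnitalStarAlgebra.adjoin ℂ S).le_topologicalClosure
      (NonUnitalStarAlgebra.subset_adjoin ℂ S ⟨a, ha, n, rfl⟩)
  have hKclosed : IsClosed (K : Set A) :=
    (NonUnitalStarAlgebra.adjoin ℂ S).isClosed_topologicalClosure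
  have hJn : ∀ n : ℕ, (star J) ^ n * J ^ n = 1 := by
    intro n
    induction n with
    | zero => simp
    | succ m ih =>
      have e : (star J) ^ (m + 1) * J ^ (m + 1)
          = (star J) ^ m * (star J * J) * J ^ m := by
        rw [pow_succ (star J), pow_succ' J]
        simp only [mul_assoc]
      rw [e, hJ, mul_one, ih]
  have hBn : ∀ n : ℕ, ∀ b ∈ B, J ^ n * b * (star J) ^ n ∈ B := by
    intro n
    induction n with
    | zero => intro b hb; simpa using hb
    | succ m ih =>
      intro b hb
      have h1 := ih (J * b * star J) (hBα b hb)
      have e : J ^ (m + 1) * b * (star J) ^ (m + 1)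
          = J ^ m * (J * b * star J) * (star J) ^ m := by
        rw [pow_succ J, pow_succ' (star J)]
        simp only [mul_assoc]
      rw [e]; exact h1
  -- generator multiplication facts
  have hgJ1 : ∀ a ∈ I, ∀ n : ℕ, J * (a * J ^ n) ∈ K := by
    intro a ha n
    have h1 : (J * a * star J) * J ^ (n + 1) ∈ K := memK _ (hIα a ha) (n + 1)
    have e3 : star J * J ^ (n + 1) = J ^ n := by
      rw [pow_succ' J, ← mul_assoc, hJ, one_mul]
    have e : (J * a * star J) * J ^ (n + 1) = J * (a * J ^ n) := by
      rw [mul_assoc (J * a), e3, mul_assoc]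
    rwa [e] at h1
  have hgJ2 : ∀ a ∈ I, ∀ n : ℕ, (a * J ^ n) * J ∈ K := by
    intro a ha n
    have h1 : a * J ^ (n + 1) ∈ K := memK a ha (n + 1)
    rwa [pow_succ, ← mul_assoc] at h1
  have hgJ3 : ∀ a ∈ I, ∀ n : ℕ, star J * (a * J ^ n) ∈ K := by
    intro a ha n
    cases n with
    | zero =>
      have h1 : star a * J ^ 1 ∈ K := memK (star a) (hIstar a ha) 1
      have h2 := star_mem h1
      simpa [star_mul, pow_one] using h2
    | succ m =>
      have h1 : (star J * a * J) * J ^ m ∈ K := memK _ (hIβ a ha) m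
      have e : (star J * a * J) * J ^ m = star J * (a * J ^ (m + 1)) := by
        rw [mul_assoc (star J * a), ← pow_succ', mul_assoc]
      rwa [e] at h1
  have hgJ4 : ∀ a ∈ I, ∀ n : ℕ, (a * J ^ n) * star J ∈ K := by
    intro a ha n
    cases n with
    | zero =>
      have h1 : (J * star a * star J) * J ^ 1 ∈ K :=
        memK _ (hIα (star a) (hIstar a ha)) 1
      have e : (J * star a * star J) * J ^ 1 = J * star a := by
        rw [pow_one, mul_assoc, hJ, mul_one]
      rw [e] at h1
      have h2 := star_mem h1
      simpa [star_mul] using h2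
    | succ m =>
      have hc : J ^ (m + 1) * 1 * (star J) ^ (m + 1) ∈ B := hBn (m + 1) 1 B.one_mem
      rw [mul_one] at hc
      have h1 : (a * (J ^ (m + 1) * (star J) ^ (m + 1))) * J ^ m ∈ K :=
        memK _ (hImulr a ha _ hc) m
      have e2 : (star J) ^ (m + 1) * J ^ m = star J := by
        rw [pow_succ' (star J), mul_assoc, hJn m, mul_one]
      have e : (a * (J ^ (m + 1) * (star J) ^ (m + 1))) * J ^ m
          = (a * J ^ (m + 1)) * star J := by
        simp only [mul_assoc, e2]
      rwa [e] at h1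
  have hgB1 : ∀ b ∈ B, ∀ a ∈ I, ∀ n : ℕ, b * (a * J ^ n) ∈ K := by
    intro b hb a ha n
    have h1 : (b * a) * J ^ n ∈ K := memK _ (hImull b hb a ha) n
    rwa [mul_assoc] at h1
  have hgB2 : ∀ b ∈ B, ∀ a ∈ I, ∀ n : ℕ, (a * J ^ n) * b ∈ K := by
    intro b hb a ha n
    have hc : J ^ n * b * (star J) ^ n ∈ B := hBn n b hb
    have h1 : (a * (J ^ n * b * (star J) ^ n)) * J ^ n ∈ K :=
      memK _ (hImulr a ha _ hc) n
    have e : (a * (J ^ n * b * (star J) ^ n)) * J ^ n = (a * J ^ n) * b := by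
      simp only [mul_assoc, hJn n, mul_one]
    rwa [e] at h1
  -- ### Step 3 : `x * K ⊆ K` and `K * x ⊆ K` for `x ∈ B ∪ {J}`
  have hmain : ∀ x : A, (x ∈ B ∨ x = J) → ∀ y ∈ K,
      y ∈ K ∧ x * y ∈ K ∧ y * x ∈ K ∧ star x * y ∈ K ∧ y * star x ∈ K := by
    intro x hx y hy
    have hy' : y ∈ closure (↑(NonUnitalStarAlgebra.adjoin ℂ S) : Set A) := hy
    have hTclosed : IsClosed {z : A | z ∈ K ∧ x * z ∈ K ∧ z * x ∈ K ∧
        star x * z ∈ K ∧ z * star x ∈ K} := by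
      exact IsClosed.inter hKclosed <| IsClosed.inter
        (hKclosed.preimage (continuous_mul_left x)) <| IsClosed.inter
        (hKclosed.preimage (continuous_mul_right x)) <| IsClosed.inter
        (hKclosed.preimage (continuous_mul_left (star x)))
        (hKclosed.preimage (continuous_mul_right (star x)))
    refine closure_minimal ?_ hTclosed hy'
    intro z hz
    induction hz using NonUnitalStarAlgebra.adjoin_induction with
    | mem w hw =>
      obtain ⟨a, ha, n, rfl⟩ := hw
      refine ⟨memK a ha n, ?_, ?_, ?_, ?_⟩
      · rcases hx with hxB | rfl
        · exact hgB1 x hxB a ha n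
        · exact hgJ1 a ha n
      · rcases hx with hxB | rfl
        · exact hgB2 x hxB a ha n
        · exact hgJ2 a ha n
      · rcases hx with hxB | rfl
        · exact hgB1 (star x) (star_mem hxB) a ha n
        · exact hgJ3 a ha n
      · rcases hx with hxB | rfl
        · exact hgB2 (star x) (star_mem hxB) a ha n
        · exact hgJ4 a ha n
    | add u v hu hv ihu ihv =>
      obtain ⟨h1, h2, h3, h4, h5⟩ := ihu
      obtain ⟨g1, g2, g3, g4, g5⟩ := ihv
      exact ⟨add_mem h1 g1,
        by rw [mul_add]; exact add_mem h2 g2,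
        by rw [add_mul]; exact add_mem h3 g3,
        by rw [mul_add]; exact add_mem h4 g4,
        by rw [add_mul]; exact add_mem h5 g5⟩
    | zero =>
      refine ⟨zero_mem _, ?_, ?_, ?_, ?_⟩ <;>
        simp only [mul_zero, zero_mul] <;> exact zero_mem _
    | mul u v hu hv ihu ihv =>
      obtain ⟨h1, h2, h3, h4, h5⟩ := ihu
      obtain ⟨g1, g2, g3, g4, g5⟩ := ihv
      exact ⟨mul_mem h1 g1,
        by rw [← mul_assoc]; exact mul_mem h2 g1,
        by rw [mul_assoc]; exact mul_mem h1 g3,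
        by rw [← mul_assoc]; exact mul_mem h4 g1,
        by rw [mul_assoc]; exact mul_mem h1 g5⟩
    | smul r u hu ihu =>
      obtain ⟨h1, h2, h3, h4, h5⟩ := ihu
      exact ⟨SMulMemClass.smul_mem r h1,
        by rw [mul_smul_comm]; exact SMulMemClass.smul_mem r h2,
        by rw [smul_mul_assoc]; exact SMulMemClass.smul_mem r h3,
        by rw [mul_smul_comm]; exact SMulMemClass.smul_mem r h4,
        by rw [smul_mul_assoc]; exact SMulMemClass.smul_mem r h5⟩
    | star u hu ihu =>
      obtain ⟨h1, h2, h3, h4, h5⟩ := ihu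
      refine ⟨star_mem h1, ?_, ?_, ?_, ?_⟩
      · have := star_mem h5
        rwa [star_mul, star_star] at this
      · have := star_mem h4
        rwa [star_mul, star_star] at this
      · have := star_mem h3
        rwa [star_mul] at this
      · have := star_mem h2
        rwa [star_mul] at this
  -- ### Step 4 : conclude via induction over `A_J`
  have hM : ∀ x' ∈ closure (↑(StarAlgebra.adjoin ℂ ((B : Set A) ∪ {J})) : Set A),
      ∀ y' ∈ K, x' * y' ∈ K ∧ y' * x' ∈ K := by
    intro x' hx'
    have hMclosed : IsClosed {w : A | ∀ y' ∈ K, w * y' ∈ K ∧ y' * w ∈ K} := by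
      have e : {w : A | ∀ y' ∈ K, w * y' ∈ K ∧ y' * w ∈ K}
          = ⋂ y' ∈ (K : Set A),
              (((· * y') ⁻¹' (K : Set A)) ∩ ((y' * ·) ⁻¹' (K : Set A))) := by
        ext w
        simp [Set.mem_iInter₂, Set.mem_inter_iff, Set.mem_preimage]
      rw [e]
      exact isClosed_biInter fun y' _ =>
        (hKclosed.preimage (continuous_mul_right y')).inter
          (hKclosed.preimage (continuous_mul_left y'))
    refine closure_minimal ?_ hMclosed hx'
    intro z hz
    induction hz using StarAlgebra.adjoin_induction with
    | mem w hw =>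
      intro y' hy'
      rcases hw with hwB | hwJ
      · obtain ⟨_, h2, h3, _, _⟩ := hmain w (Or.inl hwB) y' hy'
        exact ⟨h2, h3⟩
      · rw [Set.mem_singleton_iff] at hwJ
        obtain ⟨_, h2, h3, _, _⟩ := hmain w (Or.inr hwJ) y' hy'
        exact ⟨h2, h3⟩
    | algebraMap r =>
      intro y' hy'
      constructor
      · rw [← Algebra.smul_def]
        exact SMulMemClass.smul_mem r hy'
      · rw [← Algebra.commutes r y', ← Algebra.smul_def]
        exact SMulMemClass.smul_mem r hy'
    | add u v hu hv ihu ihv =>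
      intro y' hy'
      obtain ⟨h1, h2⟩ := ihu y' hy'
      obtain ⟨g1, g2⟩ := ihv y' hy'
      exact ⟨by rw [add_mul]; exact add_mem h1 g1,
        by rw [mul_add]; exact add_mem h2 g2⟩
    | mul u v hu hv ihu ihv =>
      intro y' hy'
      have hvy : v * y' ∈ K := (ihv y' hy').1
      have hyu : y' * u ∈ K := (ihu y' hy').2
      exact ⟨by rw [mul_assoc]; exact (ihu _ hvy).1,
        by rw [← mul_assoc]; exact (ihv _ hyu).2⟩
    | star u hu ihu =>
      intro y' hy'
      constructor
      · have := star_mem ((ihu (star y') (star_mem hy')).2)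
        rwa [star_mul, star_star] at this
      · have := star_mem ((ihu (star y') (star_mem hy')).1)
        rwa [star_mul, star_star] at this
  intro x hx y hy
  have hx' : x ∈ closure (↑(StarAlgebra.adjoin ℂ ((B : Set A) ∪ {J})) : Set A) := by
    rwa [← StarSubalgebra.topologicalClosure_coe, SetLike.mem_coe]
  exact hM x hx' y hy
end

section
/- For every bounded function g : ℕ → ℂ, the Bernoulli shift satisfies S M_g = M_{g_S} S, where g_S(x) := g((x − (x mod s))/s) = g(⌊x/s⌋). -/
noncomputable section

lemma hasSum_evec (s : ℕ) (f : Hsp s) :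
    HasSum (fun v => f v • Evec s v) f := by
  have h := lp.hasSum_single (E := fun _ : Vtx s => ℂ) ENNReal.ofNat_ne_top f
  convert h using 2 with v
  rw [Evec, ← lp.single_smul]
  simp [smul_eq_mul]

lemma ext_evec {s : ℕ} (A B : Hsp s →L[ℂ] Hsp s)
    (h : ∀ v, A (Evec s v) = B (Evec s v)) : A = B := by
  refine ContinuousLinearMap.ext fun f => ?_
  have h1 := hasSum_evec s f
  have hA : HasSum (fun v => f v • A (Evec s v)) (A f) := by
    simpa [map_smul] using A.hasSum h1
  have hB : HasSum (fun v => f v • B (Evec s v)) (B f) := by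
    simpa [map_smul] using B.hasSum h1
  simp only [h] at hA
  exact hA.unique hB

/-- For every bounded `g : ℕ → ℂ`, the Bernoulli shift
`S E_{(n,x)} = (1/s)·Σ_{j=0}^{s-1} E_{(n+1, s·x+j)}` satisfies `S M_g = M_{g_S} S`,
where `g_S(x) = g((x − (x mod s))/s) = g(⌊x/s⌋)`. -/
theorem statement16 (s : ℕ) (hs : 2 ≤ s) (S : Hsp s →L[ℂ] Hsp s)
    (hS : ∀ (n : ℕ) (x : Fin (s ^ n)),
      S (Evec s ⟨n, x⟩) = (1 / (s : ℂ)) • ∑ j : Fin s, Evec s ⟨n + 1, idxS s n x j⟩)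
    (g : ℕ → ℂ) (hg : ∃ C : ℝ, ∀ x : ℕ, ‖g x‖ ≤ C)
    (Mg MgS : Hsp s →L[ℂ] Hsp s)
    (hMg : ∀ (n : ℕ) (x : Fin (s ^ n)), Mg (Evec s ⟨n, x⟩) = g (x : ℕ) • Evec s ⟨n, x⟩)
    (hMgS : ∀ (n : ℕ) (x : Fin (s ^ n)),
      MgS (Evec s ⟨n, x⟩) = g (((x : ℕ) - (x : ℕ) % s) / s) • Evec s ⟨n, x⟩) :
    S * Mg = MgS * S := by
  apply ext_evec
  rintro ⟨n, x⟩
  have key : ∀ j : Fin s,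
      g ((((idxS s n x j : ℕ)) - (idxS s n x j : ℕ) % s) / s) = g (x : ℕ) := by
    intro j
    congr 1
    have hj : (j : ℕ) < s := j.2
    have hmod : (s * (x : ℕ) + (j : ℕ)) % s = (j : ℕ) := by
      rw [Nat.mul_add_mod, Nat.mod_eq_of_lt hj]
    show ((s * (x : ℕ) + (j : ℕ)) - (s * (x : ℕ) + (j : ℕ)) % s) / s = (x : ℕ)
    rw [hmod, Nat.add_sub_cancel, Nat.mul_div_cancel_left _ (by omega)]
  simp only [ContinuousLinearMap.mul_apply, hMg, map_smul, hS, hMgS, map_sum, Finset.smul_sum, key]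
  exact Finset.sum_congr rfl fun j _ => smul_comm _ _ _

end
end

section
/- Let f : X → ℂ be continuous, where X = ∏_{n∈ℕ} ZMod s carries the product topology. Then the diagonal operator M_f on H determined by M_f E_{(n,x)} = f(ι(x))·E_{(n,x)} is bounded and satisfies ‖M_f‖ = sup_{y ∈ X} |f(y)|; in particular, the map f ↦ M_f is an isometric (hence faithful) representation of C(X) on H. -/
/- Fix an integer `s ≥ 2`.  `Vtx s = Σ n, Fin (s^n)`, `Hsp s = ℓ²(Vtx s, ℂ)` with
canonical orthonormal basis `Evec s v = lp.single 2 v 1`.  The space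
`X = ∏_{n∈ℕ} ZMod s`, with each factor discrete and the product (Tychonoff)
topology, models the `s`-adic integers `ℤ_s`, and `ι : ℕ → X` is the base-`s`
digit embedding `ι(x)(n) = (x / s^n) mod s`. -/

noncomputable section

instance (s : ℕ) : TopologicalSpace (ZMod s) := ⊥

instance (s : ℕ) : DiscreteTopology (ZMod s) := ⟨rfl⟩

/-- The base-`s` digit embedding `ι : ℕ → ∏_{n∈ℕ} ZMod s`. -/
def iota (s : ℕ) (x : ℕ) : ℕ → ZMod s := fun n => (((x / s ^ n) % s : ℕ) : ZMod s)

lemma aux_digit (s : ℕ) (hs : 2 ≤ s) :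
    ∀ (L : List ℕ), (∀ d ∈ L, d < s) → ∀ n (hn : n < L.length),
      Nat.ofDigits s L / s ^ n % s = L.get ⟨n, hn⟩
  | [] => by simp
  | d :: t => by
    intro hL n hn
    cases n with
    | zero =>
      simp only [pow_zero, Nat.div_one, Nat.ofDigits_cons, List.get]
      rw [Nat.add_mul_mod_self_left]
      exact Nat.mod_eq_of_lt (hL d List.mem_cons_self)
    | succ n =>
      have hstep : Nat.ofDigits s (d :: t) / s ^ (n + 1) = Nat.ofDigits s t / s ^ n := by
        rw [pow_succ', ← Nat.div_div_eq_div_mul, Nat.ofDigits_cons]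
        congr 1
        rw [Nat.add_mul_div_left _ _ (by omega : 0 < s),
          Nat.div_eq_of_lt (hL d List.mem_cons_self), zero_add]
      rw [hstep]
      exact aux_digit s hs t (fun e he => hL e (List.mem_cons_of_mem _ he)) n
        (by simpa using Nat.lt_of_succ_lt_succ hn)

set_option maxHeartbeats 1000000 in
/-- For continuous `f : ∏_{n∈ℕ} ZMod s → ℂ`, the diagonal operator
`M_f E_{(n,x)} = f(ι(x))·E_{(n,x)}` satisfies `‖M_f‖ = sup_{y} |f(y)|`; thus
`f ↦ M_f` is an isometric (hence faithful) representation of `C(ℤ_s)`. -/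
theorem statement19 (s : ℕ) (hs : 2 ≤ s)
    (f : (ℕ → ZMod s) → ℂ) (hf : Continuous f)
    (M : Hsp s →L[ℂ] Hsp s)
    (hM : ∀ (n : ℕ) (x : Fin (s ^ n)),
      M (Evec s ⟨n, x⟩) = f (iota s (x : ℕ)) • Evec s ⟨n, x⟩) :
    ‖M‖ = ⨆ y : ℕ → ZMod s, ‖f y‖ := by
  haveI : NeZero s := ⟨by omega⟩
  have hbdd : BddAbove (Set.range fun y : ℕ → ZMod s => ‖f y‖) :=
    (isCompact_range (hf.norm)).bddAbove
  set C : ℝ := ⨆ y : ℕ → ZMod s, ‖f y‖ with hC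
  have hfC : ∀ y, ‖f y‖ ≤ C := fun y => le_ciSup hbdd y
  have hC0 : 0 ≤ C := (norm_nonneg _).trans (hfC (fun _ => 0))
  -- norm of basis vectors
  have hE1 : ∀ v : Vtx s, ‖Evec s v‖ = 1 := by
    intro v
    have := lp.norm_single (p := 2) (E := fun _ : Vtx s => ℂ) (by norm_num)
      v (1 : ℂ)
    simpa [Evec] using this
  -- the diagonal symbol
  set g : Vtx s → ℂ := fun v => f (iota s (v.2 : ℕ)) with hg
  have hMg : ∀ v : Vtx s, M (Evec s v) = g v • Evec s v := by
    rintro ⟨n, x⟩; exact hM n x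
  have hgC : ∀ v, ‖g v‖ ≤ C := fun v => hfC _
  -- lower bound on elements of the range of iota
  have key : ∀ x : ℕ, ‖f (iota s x)‖ ≤ ‖M‖ := by
    intro x
    have hx : x < s ^ x := Nat.lt_pow_self (by omega)
    set v : Vtx s := ⟨x, ⟨x, hx⟩⟩
    have h1 : ‖g v • Evec s v‖ ≤ ‖M‖ * ‖Evec s v‖ := by
      rw [← hMg v]; exact M.le_opNorm _
    rw [norm_smul, hE1 v, mul_one, mul_one] at h1
    exact h1
  have lower : C ≤ ‖M‖ := by
    refine ciSup_le fun y => ?_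
    set xseq : ℕ → ℕ := fun N => Nat.ofDigits s ((List.range N).map fun k => (y k).val)
      with hxseq
    have hd : ∀ N n, n < N → iota s (xseq N) n = y n := by
      intro N n hn
      have hL : ∀ d ∈ (List.range N).map fun k => (y k).val, d < s := by
        intro d hdm
        simp only [List.mem_map, List.mem_range] at hdm
        obtain ⟨k, _, rfl⟩ := hdm
        exact ZMod.val_lt _
      have hlen : n < ((List.range N).map fun k => (y k).val).length := by simpa
      have hdig := aux_digit s hs _ hL n hlen
      show (((xseq N / s ^ n) % s : ℕ) : ZMod s) = y n
      rw [hxseq, hdig]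
      simp [ZMod.natCast_val, ZMod.cast_id]
    have htend : Filter.Tendsto (fun N => iota s (xseq N)) Filter.atTop (nhds y) := by
      rw [tendsto_pi_nhds]
      intro n
      refine tendsto_const_nhds.congr' ?_
      filter_upwards [Filter.eventually_gt_atTop n] with N hN
      exact (hd N n hN).symm
    have hlim : Filter.Tendsto (fun N => ‖f (iota s (xseq N))‖) Filter.atTop (nhds ‖f y‖) :=
      ((hf.tendsto y).comp htend).norm
    exact le_of_tendsto hlim (Filter.Eventually.of_forall fun N => key (xseq N))
  -- upper bound
  classical
  have hcoordgen : ∀ (h : Hsp s) (u : Vtx s), h u = inner (𝕜 := ℂ) (Evec s u) h := by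
    intro h u
    rw [Evec, lp.inner_single_left]
    simp [RCLike.inner_apply]
  have hsingle : ∀ (w u : Vtx s), (Evec s w) u = if u = w then 1 else 0 := by
    intro w u
    by_cases h : u = w
    · subst h; simp [Evec, lp.single_apply_self]
    · simp only [Evec, lp.single_apply, Pi.single_apply, dif_neg h, if_neg h]
  have hadj : ∀ w : Vtx s,
      ContinuousLinearMap.adjoint M (Evec s w) = (starRingEnd ℂ) (g w) • Evec s w := by
    intro w
    apply lp.ext
    funext u
    have h1 : (ContinuousLinearMap.adjoint M (Evec s w)) u
        = inner (𝕜 := ℂ) (M (Evec s u)) (Evec s w) := by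
      rw [hcoordgen, ContinuousLinearMap.adjoint_inner_right]
    rw [h1, hMg u, inner_smul_left]
    have h2 : inner (𝕜 := ℂ) (Evec s u) (Evec s w) = (Evec s w) u := by
      rw [Evec, lp.inner_single_left]; simp [RCLike.inner_apply]
    show _ = (starRingEnd ℂ (g w)) • (Evec s w) u
    rw [h2, hsingle w u, smul_eq_mul]
    split_ifs with h
    · subst h; rfl
    · simp
  have hcoord : ∀ (v : Hsp s) (w : Vtx s), (M v) w = g w * v w := by
    intro v w
    rw [hcoordgen (M v) w, ← ContinuousLinearMap.adjoint_inner_left, hadj w,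
      inner_smul_left, hcoordgen v w]
    simp
  have upper : ‖M‖ ≤ C := by
    refine M.opNorm_le_bound hC0 fun v => ?_
    have hp2 : (0:ℝ) < (2:ENNReal).toReal := by norm_num
    have htr : (2:ENNReal).toReal = (2:ℝ) := by norm_num
    have h1 : ‖M v‖ ^ (2:ℝ) = ∑' w, ‖(M v) w‖ ^ (2:ℝ) := by
      simpa [htr] using lp.norm_rpow_eq_tsum hp2 (M v)
    have h2 : ‖v‖ ^ (2:ℝ) = ∑' w, ‖v w‖ ^ (2:ℝ) := by
      simpa [htr] using lp.norm_rpow_eq_tsum hp2 v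
    have hsum1 : Summable fun w => ‖(M v) w‖ ^ (2:ℝ) := by
      have := ((lp.memℓp (M v)).summable hp2); simpa [htr] using this
    have hsum2 : Summable fun w => ‖v w‖ ^ (2:ℝ) := by
      have := ((lp.memℓp v).summable hp2); simpa [htr] using this
    have hterm : ∀ w, ‖(M v) w‖ ^ (2:ℝ) ≤ C ^ (2:ℝ) * ‖v w‖ ^ (2:ℝ) := by
      intro w
      rw [hcoord v w, ← Real.mul_rpow hC0 (norm_nonneg _)]
      refine Real.rpow_le_rpow (norm_nonneg _) ?_ (by norm_num)
      rw [norm_mul]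
      exact mul_le_mul_of_nonneg_right (hgC w) (norm_nonneg _)
    have hle : ‖M v‖ ^ (2:ℝ) ≤ (C * ‖v‖) ^ (2:ℝ) := by
      rw [h1, Real.mul_rpow hC0 (norm_nonneg _), h2, ← tsum_mul_left]
      exact Summable.tsum_le_tsum hterm hsum1 (hsum2.mul_left _)
    have e1 : ‖M v‖ ^ (2:ℝ) = ‖M v‖ ^ (2:ℕ) := by
      rw [← Real.rpow_natCast]; norm_num
    have e2 : (C * ‖v‖) ^ (2:ℝ) = (C * ‖v‖) ^ (2:ℕ) := by
      rw [← Real.rpow_natCast]; norm_num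
    rw [e1, e2] at hle
    nlinarith [norm_nonneg (M v), mul_nonneg hC0 (norm_nonneg v)]
  exact le_antisymm upper lower
end
end
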